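/- Let t : C → A and t′ : C′ → A′ be twisting cochains, where C, C′ are counital chain coalgebras with counits ε : C → ℤ, ε′ : C′ → ℤ, and A, A′ are unital chain algebras with units η : ℤ → A, η′ : ℤ → A′. Then t * t′ := t⊗η′ε′ + ηε⊗t′ : C⊗C′ → A⊗A′ is a twisting cochain from the tensor product coalgebra C⊗C′ to the tensor product algebra A⊗A′. -/

import Mathlib

open CategoryTheory Simplicial DirectSum

set_option maxHeartbeats 1000000
set_option synthInstance.maxHeartbeats 200000
set_option linter.unusedVariables false

noncomputable section

/-- An ℕ-graded chain complex of abelian groups, in "total" form: a single abelian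
group together with an internal grading and a differential of degree `-1`. -/
structure GCx : Type 1 where
  X : Type
  [inst : AddCommGroup X]
  gr : ℕ → AddSubgroup X
  internal : DirectSum.IsInternal gr
  d : X →+ X
  d_gr : ∀ n, ∀ x ∈ gr (n + 1), d x ∈ gr n
  d_gr0 : ∀ x ∈ gr 0, d x = 0
  dd : ∀ x, d (d x) = 0

attribute [instance] GCx.inst

namespace GCx

/-- The decomposition map of an internally graded group. -/
def dec (A : GCx) : A.X →+ ⨁ n, A.gr n :=
  (AddEquiv.ofBijective (DirectSum.coeAddMonoidHom A.gr) A.internal).symm.toAddMonoidHom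

/-- The operator multiplying a homogeneous element of degree `n` by `c n`. -/
def sgn (A : GCx) (c : ℕ → ℤ) : A.X →+ A.X :=
  (DirectSum.toAddMonoid fun n =>
    AddMonoidHom.mk' (fun x : A.gr n => c n • (x : A.X))
      (fun a b => by simp [smul_add])).comp A.dec

/-- The Koszul sign operator `x ↦ (-1)^{|x|} x`. -/
def eps (A : GCx) : A.X →+ A.X := A.sgn fun n => (-1) ^ n

end GCx

/-- A degree `0` chain map between graded chain complexes. -/
def IsChainMap (A B : GCx) (f : A.X →+ B.X) : Prop :=
  (∀ n, ∀ x ∈ A.gr n, f x ∈ B.gr n) ∧ ∀ x, f (A.d x) = B.d (f x)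

/-- A degree `+1` linear map. -/
def IsDegreePlusOne (A B : GCx) (h : A.X →+ B.X) : Prop :=
  ∀ n, ∀ x ∈ A.gr n, h x ∈ B.gr (n + 1)

/-- `h` is a chain homotopy from `f` to `g`, i.e. `dh + hd = f - g`. -/
def IsHomotopyFromTo (A B : GCx) (h f g : A.X →+ B.X) : Prop :=
  ∀ x, B.d (h x) + h (A.d x) = f x - g x

/-- Build a bi-additive map from a function which is additive in each variable. -/
def mkBi {A B Z : Type} [AddCommGroup A] [AddCommGroup B] [AddCommGroup Z]
    (F : A → B → Z) (hA : ∀ a a' b, F (a + a') b = F a b + F a' b)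
    (hB : ∀ a b b', F a (b + b') = F a b + F a b') : A →+ B →+ Z :=
  AddMonoidHom.mk' (fun a => AddMonoidHom.mk' (F a) (hB a))
    (fun a a' => by ext b; simp [hA])

@[simp] lemma mkBi_apply {A B Z : Type} [AddCommGroup A] [AddCommGroup B] [AddCommGroup Z]
    (F : A → B → Z) (hA) (hB) (a : A) (b : B) : mkBi F hA hB a b = F a b := rfl

/-- Pre-compose a bi-additive map with additive maps in each slot. -/
def bicomp {A A' B B' Z : Type} [AddCommGroup A] [AddCommGroup A'] [AddCommGroup B]
    [AddCommGroup B'] [AddCommGroup Z] (f : A →+ B →+ Z) (g : A' →+ A) (h : B' →+ B) :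
    A' →+ B' →+ Z :=
  mkBi (fun a b => f (g a) (h b)) (fun a a' b => by simp) (fun a b b' => by simp)

/-- An abstract tensor product of graded chain complexes: a bi-additive structure
map satisfying the graded Leibniz rule and the universal property of the tensor
product of the underlying abelian groups. -/
structure TensorCx (A B T : GCx) : Type 1 where
  tmul : A.X →+ B.X →+ T.X
  tmul_gr : ∀ p q a b, a ∈ A.gr p → b ∈ B.gr q → tmul a b ∈ T.gr (p + q)
  d_tmul : ∀ p a, a ∈ A.gr p → ∀ b,
    T.d (tmul a b) = tmul (A.d a) b + ((-1 : ℤ) ^ p) • tmul a (B.d b)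
  up : ∀ (Z : Type) [AddCommGroup Z] (g : A.X →+ B.X →+ Z),
      ∃! h : T.X →+ Z, ∀ a b, h (tmul a b) = g a b

/-- The additive map out of a tensor product induced by a bi-additive map. -/
def TensorCx.lift {A B T : GCx} (tt : TensorCx A B T) {Z : Type} [AddCommGroup Z]
    (g : A.X →+ B.X →+ Z) : T.X →+ Z := (tt.up Z g).exists.choose

/-- The tensor product `f ⊗ g` of two (degree zero) maps. -/
def TensorCx.map {A B T A' B' T' : GCx} (tt : TensorCx A B T) (tt' : TensorCx A' B' T')
    (f : A.X →+ A'.X) (g : B.X →+ B'.X) : T.X →+ T'.X := tt.lift (bicomp tt'.tmul f g)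

/-- `twistBi A B s f` is the bi-additive map `(a, b) ↦ Σ s p q • f a_p b_q`, where
`a_p`, `b_q` are the homogeneous components; used to introduce Koszul signs. -/
def twistBi (A B : GCx) {Z : Type} [AddCommGroup Z] (s : ℕ → ℕ → ℤ)
    (f : A.X →+ B.X →+ Z) : A.X →+ B.X →+ Z :=
  (DirectSum.toAddMonoid fun p =>
    (AddMonoidHom.mk' (fun φ : B.X →+ Z => φ.comp (B.sgn (s p)))
      (fun φ ψ => by ext b; simp)).comp (f.comp (A.gr p).subtype)).comp A.dec
/-- A (unital, associative) differential graded algebra over ℤ, in total form. -/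
structure GAlg : Type 1 extends GCx where
  one : toGCx.X
  mul : toGCx.X →+ toGCx.X →+ toGCx.X
  one_gr : one ∈ gr 0
  mul_gr : ∀ p q a b, a ∈ gr p → b ∈ gr q → mul a b ∈ gr (p + q)
  one_mul : ∀ a, mul one a = a
  mul_one : ∀ a, mul a one = a
  mul_assoc : ∀ a b c, mul (mul a b) c = mul a (mul b c)
  leibniz : ∀ p a, a ∈ gr p → ∀ b,
    d (mul a b) = mul (d a) b + ((-1 : ℤ) ^ p) • mul a (d b)

/-- The data of a map of (graded) algebras: an additive map preserving `1` and
multiplication. -/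
structure AlgMapData (A B : GAlg) : Type where
  f : A.X →+ B.X
  map_one : f A.one = B.one
  map_mul : ∀ a b, f (A.mul a b) = B.mul (f a) (f b)

/-- `h` is an `(F, G)`-derivation:  `h(ab) = h(a)G(b) + (-1)^{|a|}F(a)h(b)`. -/
def IsDerivation (A B : GAlg) (F G : A.X →+ B.X) (h : A.X →+ B.X) : Prop :=
  ∀ p a, a ∈ A.gr p → ∀ b,
    h (A.mul a b) = B.mul (h a) (G b) + ((-1 : ℤ) ^ p) • B.mul (F a) (h b)

/-- `h` is a derivation homotopy from the algebra map `F` to the algebra map `G`. -/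
def IsDerivationHomotopy (A B : GAlg) (F G : A.X →+ B.X) (h : A.X →+ B.X) : Prop :=
  IsDegreePlusOne A.toGCx B.toGCx h ∧
  IsHomotopyFromTo A.toGCx B.toGCx h F G ∧
  IsDerivation A B F G h

/-- An abstract tensor product of two graded algebras: a tensor product of the
underlying complexes, whose multiplication is given by the graded (Koszul) rule. -/
structure TensorAlgStr (A B T : GAlg) : Type 1 extends TensorCx A.toGCx B.toGCx T.toGCx where
  one_tmul : T.one = tmul A.one B.one
  mul_tmul : ∀ q b, b ∈ B.gr q → ∀ p' a', a' ∈ A.gr p' → ∀ a b',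
    T.mul (tmul a b) (tmul a' b') = ((-1 : ℤ) ^ (q * p')) • tmul (A.mul a a') (B.mul b b')

/-- An abstract model for the cobar construction `Ω C` of a connected coaugmented
chain coalgebra `C`, as a graded algebra: it is free (as a graded algebra) on the
desuspension of the positive-degree part of `C`, via the generator map `gen = s⁻¹`. -/
structure FreeAlgOver (C : GCx) : Type 1 where
  A : GAlg
  gen : C.X →+ A.X
  gen_gr : ∀ n, ∀ x ∈ C.gr (n + 1), gen x ∈ A.gr n
  gen_gr0 : ∀ x ∈ C.gr 0, gen x = 0
  free : ∀ (B : GAlg) (t : C.X →+ B.X), (∀ x ∈ C.gr 0, t x = 0) →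
    ∃! h : A.X →+ B.X, h A.one = B.one ∧ (∀ a b, h (A.mul a b) = B.mul (h a) (h b)) ∧
      ∀ c, h (gen c) = t c

/-- The differential of `Ω C` is the cobar differential:
`d (s⁻¹ c) = - s⁻¹ (d c) + Σ (-1)^{|c_i|} s⁻¹ c_i ⬝ s⁻¹ c_j`, the sum being over the
reduced coproduct `Δ̄ c = Δ c - c ⊗ η - η ⊗ c` of `c`. -/
def CobarDiffSpec (C : GCx) {TC : GCx} (tt : TensorCx C C TC) (comul : C.X →+ TC.X)
    (eta : C.X) (Om : FreeAlgOver C) : Prop :=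
  ∀ c, Om.A.d (Om.gen c) =
    - Om.gen (C.d c) +
      (tt.lift (bicomp Om.A.mul (Om.gen.comp C.eps) Om.gen))
        (comul c - tt.tmul c eta - tt.tmul eta c)

/-- Milgram's natural map `q : Ω (C ⊗ C') → Ω C ⊗ Ω C'`, characterized on the
generators by `q (s⁻¹(x ⊗ 1)) = s⁻¹ x ⊗ 1`, `q (s⁻¹(1 ⊗ y)) = 1 ⊗ s⁻¹ y`, and
`q (s⁻¹ (x ⊗ y)) = 0` for `x, y` of positive degree. -/
def MilgramSpec {CA CB T : GCx} (tt : TensorCx CA CB T)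
    (cuA : CA.X →+ ℤ) (cuB : CB.X →+ ℤ)
    (OmA : FreeAlgOver CA) (OmB : FreeAlgOver CB) (OmT : FreeAlgOver T)
    {TOm : GAlg} (ttOm : TensorAlgStr OmA.A OmB.A TOm) (q : AlgMapData OmT.A TOm) : Prop :=
  ∀ a b, q.f (OmT.gen (tt.tmul a b)) =
    cuB b • ttOm.tmul (OmA.gen a) OmB.A.one + cuA a • ttOm.tmul OmA.A.one (OmB.gen b)

/-- The Gugenheim–Munkholm map `Ω̃f : Ω Y → Ω T` associated to Eilenberg-Zilber data
with projection `awm`, homotopy `phi` and coproduct `cm` on `Y`; characterized on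
generators by the recursive formula collecting the family `F_k`:
`Ω̃f (s⁻¹ z) = s⁻¹ (f z) - μ ((Ω̃f ∘ s⁻¹) ⊗ (Ω̃f ∘ s⁻¹)) (Δ (φ z))` (Koszul signs via `eps`). -/
def GMAlgSpec {Y T : GCx} (awm : Y.X →+ T.X) (phi : Y.X →+ Y.X)
    {TY : GCx} (ttY : TensorCx Y Y TY) (cm : Y.X →+ TY.X)
    (OmY : FreeAlgOver Y) (OmT : FreeAlgOver T) (F : AlgMapData OmY.A OmT.A) : Prop :=
  ∀ z, F.f (OmY.gen z) = OmT.gen (awm z) -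
    (ttY.lift (bicomp OmT.A.mul ((F.f.comp OmY.gen).comp Y.eps) (F.f.comp OmY.gen)))
      (cm (phi z))

/-- The Gugenheim–Munkholm homotopy `Ω̃φ : Ω Y → Ω Y` (collected form of the family
`Φ_k`), characterized on generators by
`Ω̃φ (s⁻¹ z) = s⁻¹ (φ z) + μ((Ω̃φ s⁻¹) ⊗ s⁻¹)(Δ φ z) + μ((Ω∇ Ω̃f s⁻¹) ⊗ (Ω̃φ s⁻¹))(Δ φ z)`. -/
def GMHtpySpec {Y T : GCx} (phi : Y.X →+ Y.X)
    {TY : GCx} (ttY : TensorCx Y Y TY) (cm : Y.X →+ TY.X)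
    (OmY : FreeAlgOver Y) (OmT : FreeAlgOver T)
    (Otf : AlgMapData OmY.A OmT.A) (Onab : AlgMapData OmT.A OmY.A)
    (H : OmY.A.X →+ OmY.A.X) : Prop :=
  ∀ z, H (OmY.gen z) = OmY.gen (phi z)
    + (ttY.lift (bicomp OmY.A.mul (H.comp OmY.gen) OmY.gen)) (cm (phi z))
    + (ttY.lift (bicomp OmY.A.mul
        ((((Onab.f.comp Otf.f).comp OmY.gen)).comp Y.eps) (H.comp OmY.gen))) (cm (phi z))

/-- A system of tensor powers `P k = W^{⊗ k}` of a graded chain complex `W`. -/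
structure PowSys (W : GCx) : Type 1 where
  P : ℕ → GCx
  emb : W.X →+ (P 1).X
  embInv : (P 1).X →+ W.X
  emb_inv : ∀ x, embInv (emb x) = x
  inv_emb : ∀ y, emb (embInv y) = y
  emb_gr : ∀ n, ∀ x ∈ W.gr n, emb x ∈ (P 1).gr n
  tk : ∀ i j, TensorCx (P i) (P j) (P (i + j))

/-- Transport along an equality of tensor-power indices. -/
def pcast {W : GCx} (PS : PowSys W) {a b : ℕ} (h : a = b) : (PS.P a).X →+ (PS.P b).X := by
  subst h; exact AddMonoidHom.id _

/-- Strict associativity of a system of tensor powers. -/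
def PowAssoc {W : GCx} (PS : PowSys W) : Prop :=
  ∀ i j k u v w, (PS.tk (i + j) k).tmul ((PS.tk i j).tmul u v) w
    = pcast PS (by omega) ((PS.tk i (j + k)).tmul u ((PS.tk j k).tmul v w))

/-- `mulgen Om PS g k : W^{⊗k} → Ω` is the map `(s⁻¹)^{⊗ k}` followed by the
`k`-fold product, i.e. `x₁ ⊗ ⋯ ⊗ x_k ↦ ± g(x₁) ⋯ g(x_k)` (with Koszul signs). -/
def mulgen {C : GCx} (Om : FreeAlgOver C) {W : GCx} (PS : PowSys W)
    (g : W.X →+ Om.A.X) : ∀ k, (PS.P k).X →+ Om.A.X := fun k => match k with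
  | 0 => 0
  | 1 => g.comp PS.embInv
  | (k + 2) => (PS.tk (k + 1) 1).lift (bicomp Om.A.mul
      ((mulgen Om PS g (k + 1)).comp (PS.P (k + 1)).eps) (g.comp PS.embInv))

/-- The Gugenheim–Munkholm family `F_k : Y → T^{⊗ k}`:  `F₁ = f` and
`F_k = - Σ_{i+j=k} (F_i ⊗ F_j) ∘ Δ_Y ∘ φ`. -/
def GMFamilySpec {Y TY : GCx} (ttY : TensorCx Y Y TY) (cm : Y.X →+ TY.X)
    (phi : Y.X →+ Y.X) {T : GCx} (PS : PowSys T) (f1 : Y.X →+ T.X)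
    (F : ∀ k, Y.X →+ (PS.P k).X) : Prop :=
  (F 0 = 0) ∧ (∀ z, F 1 z = PS.emb (f1 z)) ∧
  ∀ k, 2 ≤ k → ∀ z, F k z =
    - ∑ p ∈ (Finset.HasAntidiagonal.antidiagonal k).attach,
        pcast PS (Finset.HasAntidiagonal.mem_antidiagonal.mp p.2)
          ((ttY.lift (bicomp (PS.tk p.1.1 p.1.2).tmul
              ((F p.1.1).comp (Y.sgn fun n => (-1) ^ ((p.1.2 - 1) * n))) (F p.1.2)))
            (cm (phi z)))

/-- The data of compatible maps `g^{⊗ k}` between two systems of tensor powers. -/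
structure PowMapData {A B : GCx} (PA : PowSys A) (PB : PowSys B) (g : A.X →+ B.X) : Type where
  m : ∀ k, (PA.P k).X →+ (PB.P k).X
  m_one : ∀ x, m 1 (PA.emb x) = PB.emb (g x)
  m_tk : ∀ i j u v, m (i + j) ((PA.tk i j).tmul u v) = (PB.tk i j).tmul (m i u) (m j v)

/-- The Gugenheim–Munkholm family `Φ_k : Y → Y^{⊗ k}`:  `Φ₁ = φ` and
`Φ_k = (Φ_{k-1} ⊗ 1 + Σ_{i+j=k} ∇^{⊗i} F_i ⊗ Φ_j) ∘ Δ_Y ∘ φ`. -/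
def GMPhiFamilySpec {Y TY : GCx} (ttY : TensorCx Y Y TY) (cm : Y.X →+ TY.X)
    (phi : Y.X →+ Y.X) {T : GCx} (PST : PowSys T) (PSY : PowSys Y)
    (F : ∀ k, Y.X →+ (PST.P k).X) {nab : T.X →+ Y.X} (nabP : PowMapData PST PSY nab)
    (Ph : ∀ k, Y.X →+ (PSY.P k).X) : Prop :=
  (Ph 0 = 0) ∧ (∀ z, Ph 1 z = PSY.emb (phi z)) ∧
  ∀ k, ∀ hk : 2 ≤ k, ∀ z, Ph k z =
    pcast PSY (by omega : k - 1 + 1 = k)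
      ((ttY.lift (bicomp (PSY.tk (k - 1) 1).tmul (Ph (k - 1)) PSY.emb)) (cm (phi z)))
    + ∑ p ∈ (Finset.HasAntidiagonal.antidiagonal k).attach,
        pcast PSY (Finset.HasAntidiagonal.mem_antidiagonal.mp p.2)
          ((ttY.lift (bicomp (PSY.tk p.1.1 p.1.2).tmul
              (((nabP.m p.1.1).comp (F p.1.1)).comp (Y.sgn fun n => (-1) ^ (p.1.2 * n)))
              (Ph p.1.2))) (cm (phi z)))
/-! ### More on lifts, the tensor-coalgebra coproduct, twisting cochains -/

lemma TensorCx.lift_tmul {A B T : GCx} (tt : TensorCx A B T) {Z : Type} [AddCommGroup Z]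
    (g : A.X →+ B.X →+ Z) (a : A.X) (b : B.X) : tt.lift g (tt.tmul a b) = g a b :=
  (tt.up Z g).exists.choose_spec a b

lemma TensorCx.lift_unique {A B T : GCx} (tt : TensorCx A B T) {Z : Type} [AddCommGroup Z]
    (g : A.X →+ B.X →+ Z) (h : T.X →+ Z) (hh : ∀ a b, h (tt.tmul a b) = g a b) :
    h = tt.lift g :=
  (tt.up Z g).unique hh fun a b => tt.lift_tmul g a b

lemma TensorCx.lift_add {A B T : GCx} (tt : TensorCx A B T) {Z : Type} [AddCommGroup Z]
    (g₁ g₂ : A.X →+ B.X →+ Z) : tt.lift (g₁ + g₂) = tt.lift g₁ + tt.lift g₂ := by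
  symm
  apply tt.lift_unique
  intro a b
  simp [TensorCx.lift_tmul]

section Rearrange

variable {C C' P TC TC' TT : GCx} (ttC : TensorCx C C TC) (ttC' : TensorCx C' C' TC')
  (ttP : TensorCx C C' P) (ttTT : TensorCx P P TT)

/-- `(x₂, y₁) ↦ ((x₁, y₂) ↦ (-1)^{|x₂||y₁|} (x₁ ⊗ y₁) ⊗ (x₂ ⊗ y₂))`. -/
def rearrM : C.X →+ C'.X →+ (C.X →+ C'.X →+ TT.X) :=
  twistBi C C' (fun p q => (-1) ^ (p * q))
    (mkBi (fun x₂ y₁ => bicomp ttTT.tmul (ttP.tmul.flip y₁) (ttP.tmul x₂))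
      (fun a a' b => by ext x₁ y₂; simp [bicomp, mkBi, map_add])
      (fun a b b' => by ext x₁ y₂; simp [bicomp, mkBi, map_add]))

/-- The inner bilinear family of `rearrange`. -/
def rearrInner (x₁ x₂ : C.X) : C'.X →+ C'.X →+ TT.X :=
  mkBi (fun y₁ y₂ => rearrM ttP ttTT x₂ y₁ x₁ y₂)
    (fun a a' b => by simp [map_add])
    (fun a b b' => by simp [map_add])

lemma rearrInner_addl (x₁ x₁' x₂ : C.X) :
    rearrInner ttP ttTT (x₁ + x₁') x₂ = rearrInner ttP ttTT x₁ x₂ + rearrInner ttP ttTT x₁' x₂ := by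
  ext y₁ y₂; simp [rearrInner, mkBi, map_add]

lemma rearrInner_addr (x₁ x₂ x₂' : C.X) :
    rearrInner ttP ttTT x₁ (x₂ + x₂') = rearrInner ttP ttTT x₁ x₂ + rearrInner ttP ttTT x₁ x₂' := by
  ext y₁ y₂; simp [rearrInner, mkBi, map_add]

/-- The rearrangement `(1 ⊗ sw ⊗ 1)` with Koszul signs:
`(x₁ ⊗ x₂) ⊗ (y₁ ⊗ y₂) ↦ (-1)^{|x₂||y₁|} (x₁ ⊗ y₁) ⊗ (x₂ ⊗ y₂)`. -/
def rearrange : TC.X →+ TC'.X →+ TT.X :=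
  ttC.lift (mkBi (fun x₁ x₂ => ttC'.lift (rearrInner ttP ttTT x₁ x₂))
    (fun a a' b => by try simp only []
                      rw [rearrInner_addl, TensorCx.lift_add])
    (fun a b b' => by try simp only []
                      rw [rearrInner_addr, TensorCx.lift_add]))

end Rearrange

/-- The coproduct of the tensor product `C ⊗ C'` of two chain coalgebras is
`(1 ⊗ sw ⊗ 1)(Δ ⊗ Δ')`. -/
def TensorComulSpec {C C' P TC TC' TT : GCx} (ttC : TensorCx C C TC)
    (ttC' : TensorCx C' C' TC') (ttP : TensorCx C C' P) (ttTT : TensorCx P P TT)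
    (comulC : C.X →+ TC.X) (comulC' : C'.X →+ TC'.X) (comulP : P.X →+ TT.X) : Prop :=
  ∀ x y, comulP (ttP.tmul x y) = rearrange ttC ttC' ttP ttTT (comulC x) (comulC' y)

/-- A twisting cochain from a chain coalgebra to a chain algebra: a degree `-1` map
`t` with `dt + td = μ (t ⊗ t) Δ` (Koszul signs via `eps`). -/
def IsTwistingCochain (C : GCx) {TC : GCx} (tt : TensorCx C C TC) (comul : C.X →+ TC.X)
    (A : GAlg) (t : C.X →+ A.X) : Prop :=
  (∀ n, ∀ x ∈ C.gr (n + 1), t x ∈ A.gr n) ∧ (∀ x ∈ C.gr 0, t x = 0) ∧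
  ∀ c, A.d (t c) + t (C.d c) = (tt.lift (bicomp A.mul (t.comp C.eps) t)) (comul c)

/-!
STATEMENT 15.  Let `t : C → A` and `t' : C' → A'` be twisting cochains, where `C, C'`
are counital chain coalgebras (with counits `ε, ε'`) and `A, A'` are unital chain
algebras (with units `η, η'`).  Then `t * t' := t ⊗ η'ε' + ηε ⊗ t' : C ⊗ C' → A ⊗ A'`
is a twisting cochain from the tensor product coalgebra `C ⊗ C'` (with coproduct
`(1 ⊗ sw ⊗ 1)(Δ ⊗ Δ')`) to the tensor product algebra `A ⊗ A'` (with Koszul product).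
-/
lemma GCx.coe_dec (Z : GCx) (x : Z.X) : DirectSum.coeAddMonoidHom Z.gr (Z.dec x) = x :=
  (AddEquiv.ofBijective (DirectSum.coeAddMonoidHom Z.gr) Z.internal).apply_symm_apply x

lemma GCx.hom_induction (Z : GCx) {p : Z.X → Prop} (h0 : p 0)
    (hadd : ∀ x y, p x → p y → p (x + y))
    (hhom : ∀ n x, x ∈ Z.gr n → p x) (x : Z.X) : p x := by
  have key : ∀ y : ⨁ n, Z.gr n, p (DirectSum.coeAddMonoidHom Z.gr y) := by
    intro y
    refine DirectSum.induction_on y ?_ ?_ ?_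
    · simpa using h0
    · intro n a; rw [DirectSum.coeAddMonoidHom_of]; exact hhom n a a.2
    · intro a b ha hb; rw [map_add]; exact hadd _ _ ha hb
  have := key (Z.dec x); rwa [Z.coe_dec] at this

lemma GCx.dec_of_mem (Z : GCx) {m : ℕ} {x : Z.X} (hx : x ∈ Z.gr m) :
    Z.dec x = DirectSum.of (fun n => Z.gr n) m ⟨x, hx⟩ := by
  apply Z.internal.injective
  rw [Z.coe_dec, DirectSum.coeAddMonoidHom_of]

lemma GCx.sgn_of_mem (Z : GCx) (c : ℕ → ℤ) {m : ℕ} {x : Z.X} (hx : x ∈ Z.gr m) :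
    Z.sgn c x = c m • x := by
  unfold GCx.sgn
  rw [AddMonoidHom.comp_apply, Z.dec_of_mem hx, DirectSum.toAddMonoid_of]
  rfl

lemma GCx.eps_of_mem (Z : GCx) {m : ℕ} {x : Z.X} (hx : x ∈ Z.gr m) :
    Z.eps x = ((-1 : ℤ) ^ m) • x := Z.sgn_of_mem _ hx

def GCx.proj (Z : GCx) (m : ℕ) : Z.X →+ Z.X := Z.sgn (fun n => if n = m then 1 else 0)

lemma GCx.proj_of_mem (Z : GCx) {m : ℕ} {x : Z.X} (hx : x ∈ Z.gr m) : Z.proj m x = x := by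
  rw [GCx.proj, Z.sgn_of_mem _ hx]; simp

lemma GCx.proj_of_mem_ne (Z : GCx) {k m : ℕ} (h : k ≠ m) {x : Z.X} (hx : x ∈ Z.gr k) :
    Z.proj m x = 0 := by
  rw [GCx.proj, Z.sgn_of_mem _ hx]; simp [h]

lemma GCx.proj_mem (Z : GCx) (m : ℕ) (x : Z.X) : Z.proj m x ∈ Z.gr m := by
  refine Z.hom_induction (p := fun y => Z.proj m y ∈ Z.gr m) ?_ ?_ ?_ x
  · show Z.proj m 0 ∈ Z.gr m
    rw [map_zero]; exact zero_mem _
  · intro a b ha hb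
    show Z.proj m (a + b) ∈ Z.gr m
    rw [map_add]; exact add_mem ha hb
  · intro n a ha
    show Z.proj m a ∈ Z.gr m
    by_cases h : n = m
    · subst h; rw [Z.proj_of_mem ha]; exact ha
    · rw [Z.proj_of_mem_ne h ha]; exact zero_mem _

lemma twistBi_of_mem (A B : GCx) {Z : Type} [AddCommGroup Z] (s : ℕ → ℕ → ℤ)
    (f : A.X →+ B.X →+ Z) {p q : ℕ} {a : A.X} {b : B.X}
    (ha : a ∈ A.gr p) (hb : b ∈ B.gr q) :
    twistBi A B s f a b = s p q • f a b := by
  unfold twistBi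
  rw [AddMonoidHom.comp_apply, A.dec_of_mem ha, DirectSum.toAddMonoid_of]
  show f a (B.sgn (s p) b) = _
  rw [B.sgn_of_mem _ hb, map_zsmul]

lemma TensorCx.hom_ext {A B T : GCx} (tt : TensorCx A B T) {Z : Type} [AddCommGroup Z]
    {h k : T.X →+ Z}
    (hh : ∀ p q a b, a ∈ A.gr p → b ∈ B.gr q → h (tt.tmul a b) = k (tt.tmul a b)) :
    h = k := by
  have step : ∀ p a, a ∈ A.gr p → ∀ b, h (tt.tmul a b) = k (tt.tmul a b) := by
    intro p a ha b
    refine B.hom_induction (p := fun b => h (tt.tmul a b) = k (tt.tmul a b)) ?_ ?_ ?_ b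
    · simp
    · intro x y hx hy; simp only [map_add, hx, hy]
    · intro q b hb; exact hh p q a b ha hb
  have key : ∀ a b, h (tt.tmul a b) = k (tt.tmul a b) := by
    intro a b
    refine A.hom_induction
      (p := fun a => ∀ b, h (tt.tmul a b) = k (tt.tmul a b)) ?_ ?_ ?_ a b
    · intro b; simp
    · intro x y hx hy b
      simp only [map_add, AddMonoidHom.add_apply, hx, hy]
    · intro n a ha; exact step n a ha
  let g : A.X →+ B.X →+ Z := mkBi (fun a b => k (tt.tmul a b))
    (fun a a' b => by simp [map_add])
    (fun a b b' => by simp [map_add])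
  exact (tt.up Z g).unique (fun a b => key a b) (fun a b => rfl)

lemma negOnePow_congr {m n : ℕ} (h : m % 2 = n % 2) : ((-1:ℤ)) ^ m = (-1) ^ n := by
  rcases Nat.even_or_odd m with hm | hm
  · have hn : Even n := by rw [Nat.even_iff] at *; omega
    rw [hm.neg_one_pow, hn.neg_one_pow]
  · have hn : Odd n := by rw [Nat.odd_iff] at *; omega
    rw [hm.neg_one_pow, hn.neg_one_pow]

lemma rearrange_tmul {C C' P TC TC' TT : GCx} (ttC : TensorCx C C TC) (ttC' : TensorCx C' C' TC')
    (ttP : TensorCx C C' P) (ttTT : TensorCx P P TT)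
    {p₂ q₁ : ℕ} (x₁ : C.X) {x₂ : C.X} {y₁ : C'.X} (y₂ : C'.X)
    (hx₂ : x₂ ∈ C.gr p₂) (hy₁ : y₁ ∈ C'.gr q₁) :
    rearrange ttC ttC' ttP ttTT (ttC.tmul x₁ x₂) (ttC'.tmul y₁ y₂)
      = ((-1 : ℤ) ^ (p₂ * q₁)) • ttTT.tmul (ttP.tmul x₁ y₁) (ttP.tmul x₂ y₂) := by
  have h1 : rearrange ttC ttC' ttP ttTT (ttC.tmul x₁ x₂)
      = ttC'.lift (rearrInner ttP ttTT x₁ x₂) := by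
    rw [rearrange, TensorCx.lift_tmul]; rfl
  rw [h1, TensorCx.lift_tmul]
  show rearrM ttP ttTT x₂ y₁ x₁ y₂ = _
  rw [rearrM, twistBi_of_mem C C' _ _ hx₂ hy₁]
  rw [AddMonoidHom.smul_apply, AddMonoidHom.smul_apply]
  rfl

lemma counit_d {C TC : GCx} (ttC : TensorCx C C TC)
    (comulC : C.X →+ TC.X) (hcm : ∀ z, comulC (C.d z) = TC.d (comulC z))
    (cu : C.X →+ ℤ) (hcu : ∀ n, ∀ x ∈ C.gr (n + 1), cu x = 0)
    (Ll Lr : TC.X →+ C.X)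
    (hLl : ∀ a b, Ll (ttC.tmul a b) = cu a • b)
    (hLr : ∀ a b, Lr (ttC.tmul a b) = cu b • a)
    (hl : ∀ c, Ll (comulC c) = c) (hr : ∀ c, Lr (comulC c) = c)
    (x : C.X) : cu (C.d x) = 0 := by
  have key : (cu.comp Ll).comp TC.d = (cu.comp C.d).comp Lr + (cu.comp C.d).comp Ll := by
    apply ttC.hom_ext
    intro p q a b ha hb
    simp only [AddMonoidHom.comp_apply, AddMonoidHom.add_apply]
    rw [ttC.d_tmul p a ha b]
    simp only [map_add, map_zsmul, hLl, hLr, smul_eq_mul]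
    rcases p with _ | s
    · rw [pow_zero]; ring
    · rw [hcu s a ha]; ring
  have h1 := DFunLike.congr_fun key (comulC x)
  simp only [AddMonoidHom.comp_apply, AddMonoidHom.add_apply] at h1
  rw [← hcm x, hl (C.d x), hr x, hl x] at h1
  omega
theorem statement15
    (C C' : GCx) (TC TC' : GCx) (ttC : TensorCx C C TC) (ttC' : TensorCx C' C' TC')
    -- the coalgebra structures on `C` and `C'`
    (comulC : C.X →+ TC.X) (hcomulC : IsChainMap C TC comulC)
    (comulC' : C'.X →+ TC'.X) (hcomulC' : IsChainMap C' TC' comulC')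
    -- the counits
    (cu : C.X →+ ℤ) (hcu : ∀ n, ∀ x ∈ C.gr (n + 1), cu x = 0)
    (cu' : C'.X →+ ℤ) (hcu' : ∀ n, ∀ x ∈ C'.gr (n + 1), cu' x = 0)
    (hcounitl : ∀ c, (ttC.lift (mkBi (fun a b => cu a • b)
        (fun a a' b => by simp [add_smul]) (fun a b b' => by simp))) (comulC c) = c)
    (hcounitr : ∀ c, (ttC.lift (mkBi (fun a b => cu b • a)
        (fun a a' b => by simp) (fun a b b' => by simp [add_smul]))) (comulC c) = c)
    (hcounitl' : ∀ c, (ttC'.lift (mkBi (fun a b => cu' a • b)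
        (fun a a' b => by simp [add_smul]) (fun a b b' => by simp))) (comulC' c) = c)
    (hcounitr' : ∀ c, (ttC'.lift (mkBi (fun a b => cu' b • a)
        (fun a a' b => by simp) (fun a b b' => by simp [add_smul]))) (comulC' c) = c)
    -- the chain algebras
    (A A' : GAlg)
    -- the twisting cochains
    (t : C.X →+ A.X) (ht : IsTwistingCochain C ttC comulC A t)
    (t' : C'.X →+ A'.X) (ht' : IsTwistingCochain C' ttC' comulC' A' t')
    -- the tensor product coalgebra `C ⊗ C'`, with its coproduct
    (P : GCx) (ttP : TensorCx C C' P)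
    (TT : GCx) (ttTT : TensorCx P P TT)
    (comulP : P.X →+ TT.X)
    (hcomulP : TensorComulSpec ttC ttC' ttP ttTT comulC comulC' comulP)
    -- the tensor product algebra `A ⊗ A'`
    (AA' : GAlg) (ttA : TensorAlgStr A A' AA') :
    IsTwistingCochain P ttTT comulP AA'
      (ttP.lift (mkBi (fun x y => cu' y • ttA.tmul (t x) A'.one + cu x • ttA.tmul A.one (t' y))
        (fun a a' b => by simp [map_add, smul_add, add_smul]; abel)
        (fun a b b' => by simp [map_add, smul_add, add_smul]; abel))) := by
  obtain ⟨htgr, ht0, hteq⟩ := ht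
  obtain ⟨htgr', ht0', hteq'⟩ := ht'
  -- counit-left/right evaluation maps
  set Ll : TC.X →+ C.X := ttC.lift (mkBi (fun a b => cu a • b)
      (fun a a' b => by simp [add_smul]) (fun a b b' => by simp)) with hLldef
  set Lr : TC.X →+ C.X := ttC.lift (mkBi (fun a b => cu b • a)
      (fun a a' b => by simp) (fun a b b' => by simp [add_smul])) with hLrdef
  set Ll' : TC'.X →+ C'.X := ttC'.lift (mkBi (fun a b => cu' a • b)
      (fun a a' b => by simp [add_smul]) (fun a b b' => by simp)) with hLl'def
  set Lr' : TC'.X →+ C'.X := ttC'.lift (mkBi (fun a b => cu' b • a)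
      (fun a a' b => by simp) (fun a b b' => by simp [add_smul])) with hLr'def
  have hLl_tmul : ∀ a b, Ll (ttC.tmul a b) = cu a • b := by
    intro a b; rw [hLldef, TensorCx.lift_tmul]; rfl
  have hLr_tmul : ∀ a b, Lr (ttC.tmul a b) = cu b • a := by
    intro a b; rw [hLrdef, TensorCx.lift_tmul]; rfl
  have hLl'_tmul : ∀ a b, Ll' (ttC'.tmul a b) = cu' a • b := by
    intro a b; rw [hLl'def, TensorCx.lift_tmul]; rfl
  have hLr'_tmul : ∀ a b, Lr' (ttC'.tmul a b) = cu' b • a := by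
    intro a b; rw [hLr'def, TensorCx.lift_tmul]; rfl
  have hl : ∀ c, Ll (comulC c) = c := fun c => hcounitl c
  have hr : ∀ c, Lr (comulC c) = c := fun c => hcounitr c
  have hl' : ∀ c, Ll' (comulC' c) = c := fun c => hcounitl' c
  have hr' : ∀ c, Lr' (comulC' c) = c := fun c => hcounitr' c
  have hthC : ∀ z, cu (C.d z) = 0 :=
    counit_d ttC comulC hcomulC.2 cu hcu Ll Lr hLl_tmul hLr_tmul hl hr
  have hthC' : ∀ z, cu' (C'.d z) = 0 :=
    counit_d ttC' comulC' hcomulC'.2 cu' hcu' Ll' Lr' hLl'_tmul hLr'_tmul hl' hr'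
  have main : ∀ tau : P.X →+ AA'.X,
      (∀ x y, tau (ttP.tmul x y)
        = cu' y • ttA.tmul (t x) A'.one + cu x • ttA.tmul A.one (t' y)) →
      IsTwistingCochain P ttTT comulP AA' tau := by
    intro tau htau
    refine ⟨?_, ?_, ?_⟩
    · -- degree -1
      intro n x hx
      have hmem : ∀ p q (a : C.X) (b : C'.X), a ∈ C.gr p → b ∈ C'.gr q → p + q = n + 1 →
          tau (ttP.tmul a b) ∈ AA'.gr n := by
        intro p q a b ha hb hpq
        rw [htau]
        rcases q with _ | q'
        · have hp : p = n + 1 := by omega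
          subst hp
          apply add_mem
          · exact AddSubgroup.zsmul_mem _ (ttA.tmul_gr n 0 _ _ (htgr n a ha) A'.one_gr) _
          · rw [hcu n a ha, zero_smul]; exact zero_mem _
        · rw [hcu' q' b hb, zero_smul, zero_add]
          rcases p with _ | p'
          · have hq : q' = n := by omega
            subst hq
            have hmm := ttA.tmul_gr 0 q' _ _ A.one_gr (htgr' q' b hb)
            exact AddSubgroup.zsmul_mem _ (by simpa using hmm) _
          · rw [hcu p' a ha, zero_smul]; exact zero_mem _
      have hmapeq : tau.comp (P.proj (n+1)) = (AA'.proj n).comp (tau.comp (P.proj (n+1))) := by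
        apply ttP.hom_ext
        intro p q a b ha hb
        have hab := ttP.tmul_gr p q a b ha hb
        simp only [AddMonoidHom.comp_apply]
        by_cases hpq : p + q = n + 1
        · rw [hpq] at hab
          rw [P.proj_of_mem hab, AA'.proj_of_mem (hmem p q a b ha hb hpq)]
        · rw [P.proj_of_mem_ne hpq hab]
          simp
      have h2 := DFunLike.congr_fun hmapeq x
      simp only [AddMonoidHom.comp_apply, P.proj_of_mem hx] at h2
      rw [h2]
      exact AA'.proj_mem n _
    · -- vanishing in degree 0
      intro x hx
      have hmapeq : tau.comp (P.proj 0) = 0 := by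
        apply ttP.hom_ext
        intro p q a b ha hb
        have hab := ttP.tmul_gr p q a b ha hb
        simp only [AddMonoidHom.comp_apply, AddMonoidHom.zero_apply]
        by_cases hpq : p + q = 0
        · have hp : p = 0 := by omega
          have hq : q = 0 := by omega
          subst hp; subst hq
          have hab0 : ttP.tmul a b ∈ P.gr 0 := by simpa using hab
          rw [P.proj_of_mem hab0, htau, ht0 a ha, ht0' b hb]
          simp
        · rw [P.proj_of_mem_ne hpq hab, map_zero]
      have h2 := DFunLike.congr_fun hmapeq x
      simp only [AddMonoidHom.comp_apply, P.proj_of_mem hx, AddMonoidHom.zero_apply] at h2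
      exact h2
    · -- the twisting equation
      set mC : TC.X →+ A.X := ttC.lift (bicomp A.mul (t.comp C.eps) t) with hmCdef
      set mC' : TC'.X →+ A'.X := ttC'.lift (bicomp A'.mul (t'.comp C'.eps) t') with hmC'def
      set GG : TT.X →+ AA'.X := ttTT.lift (bicomp AA'.mul (tau.comp P.eps) tau) with hGGdef
      have hmC_tmul : ∀ (p₁ : ℕ) (x₁ x₂ : C.X), x₁ ∈ C.gr p₁ →
          mC (ttC.tmul x₁ x₂) = ((-1:ℤ)^p₁) • A.mul (t x₁) (t x₂) := by
        intro p₁ x₁ x₂ h₁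
        rw [hmCdef, TensorCx.lift_tmul]
        show A.mul (t (C.eps x₁)) (t x₂) = _
        rw [C.eps_of_mem h₁]
        simp only [map_zsmul, AddMonoidHom.smul_apply]
      have hmC'_tmul : ∀ (q₁ : ℕ) (y₁ y₂ : C'.X), y₁ ∈ C'.gr q₁ →
          mC' (ttC'.tmul y₁ y₂) = ((-1:ℤ)^q₁) • A'.mul (t' y₁) (t' y₂) := by
        intro q₁ y₁ y₂ h₁
        rw [hmC'def, TensorCx.lift_tmul]
        show A'.mul (t' (C'.eps y₁)) (t' y₂) = _
        rw [C'.eps_of_mem h₁]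
        simp only [map_zsmul, AddMonoidHom.smul_apply]
      have hGG_tmul : ∀ u v, GG (ttTT.tmul u v) = AA'.mul (tau (P.eps u)) (tau v) := by
        intro u v; rw [hGGdef, TensorCx.lift_tmul]; rfl
      have htau_eps : ∀ (p₁ q₁ : ℕ) (x₁ : C.X) (y₁ : C'.X), x₁ ∈ C.gr p₁ → y₁ ∈ C'.gr q₁ →
          tau (P.eps (ttP.tmul x₁ y₁)) = ((-1:ℤ)^(p₁+q₁)) •
            (cu' y₁ • ttA.tmul (t x₁) A'.one + cu x₁ • ttA.tmul A.one (t' y₁)) := by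
        intro p₁ q₁ x₁ y₁ h₁ h₂
        rw [P.eps_of_mem (ttP.tmul_gr p₁ q₁ x₁ y₁ h₁ h₂), map_zsmul, htau]
      have P11 : ∀ (x₁ : C.X) (p₂ : ℕ) (x₂ : C.X), x₂ ∈ C.gr p₂ →
          AA'.mul (ttA.tmul (t x₁) A'.one) (ttA.tmul (t x₂) A'.one)
            = ttA.tmul (A.mul (t x₁) (t x₂)) A'.one := by
        intro x₁ p₂ x₂ h₂
        rcases p₂ with _ | s
        · rw [ht0 x₂ h₂]; simp
        · rw [ttA.mul_tmul 0 A'.one A'.one_gr s (t x₂) (htgr s x₂ h₂) (t x₁) A'.one,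
            Nat.zero_mul, pow_zero, one_smul, A'.one_mul]
      have P12 : ∀ (x₁ : C.X) (y₂ : C'.X),
          AA'.mul (ttA.tmul (t x₁) A'.one) (ttA.tmul A.one (t' y₂))
            = ttA.tmul (t x₁) (t' y₂) := by
        intro x₁ y₂
        rw [ttA.mul_tmul 0 A'.one A'.one_gr 0 A.one A.one_gr (t x₁) (t' y₂),
          Nat.zero_mul, pow_zero, one_smul, A.mul_one, A'.one_mul]
      have P21 : ∀ (q₁ : ℕ) (y₁ : C'.X), y₁ ∈ C'.gr q₁ → ∀ (p₂ : ℕ) (x₂ : C.X), x₂ ∈ C.gr p₂ →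
          AA'.mul (ttA.tmul A.one (t' y₁)) (ttA.tmul (t x₂) A'.one)
            = ((-1:ℤ)^((q₁-1)*(p₂-1))) • ttA.tmul (t x₂) (t' y₁) := by
        intro q₁ y₁ h₁ p₂ x₂ h₂
        rcases q₁ with _ | k
        · rw [ht0' y₁ h₁]; simp
        · rcases p₂ with _ | l
          · rw [ht0 x₂ h₂]; simp
          · rw [ttA.mul_tmul k (t' y₁) (htgr' k y₁ h₁) l (t x₂) (htgr l x₂ h₂) A.one A'.one,
              A.one_mul, A'.mul_one, Nat.add_sub_cancel, Nat.add_sub_cancel]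
      have P22 : ∀ (q₁ : ℕ) (y₁ : C'.X), y₁ ∈ C'.gr q₁ → ∀ (y₂ : C'.X),
          AA'.mul (ttA.tmul A.one (t' y₁)) (ttA.tmul A.one (t' y₂))
            = ttA.tmul A.one (A'.mul (t' y₁) (t' y₂)) := by
        intro q₁ y₁ h₁ y₂
        rcases q₁ with _ | k
        · rw [ht0' y₁ h₁]; simp
        · rw [ttA.mul_tmul k (t' y₁) (htgr' k y₁ h₁) 0 A.one A.one_gr A.one (t' y₂),
            Nat.mul_zero, pow_zero, one_smul, A.one_mul]
      set HH : TC.X →+ TC'.X →+ AA'.X := mkBi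
        (fun u v => cu' (Ll' v) • ttA.tmul (mC u) A'.one
          + cu (Ll u) • ttA.tmul A.one (mC' v)
          + ttA.tmul (t (C.eps (Lr u))) (t' (Ll' v))
          - ttA.tmul (t (C.eps (Ll u))) (t' (Lr' v)))
        (fun u u' v => by
          simp only [map_add, add_smul, smul_add, AddMonoidHom.add_apply]
          abel)
        (fun u v v' => by
          simp only [map_add, add_smul, smul_add, AddMonoidHom.add_apply]
          abel) with hHHdef
      set GGbi : TC.X →+ TC'.X →+ AA'.X := mkBi
        (fun u v => GG (rearrange ttC ttC' ttP ttTT u v))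
        (fun u u' v => by simp only [map_add, AddMonoidHom.add_apply])
        (fun u v v' => by simp only [map_add]) with hGGbidef
      have keyGH : GGbi = HH := by
        apply ttC.hom_ext
        intro p₁ p₂ x₁ x₂ hx₁ hx₂
        apply ttC'.hom_ext
        intro q₁ q₂ y₁ y₂ hy₁ hy₂
        have hL1 : GGbi (ttC.tmul x₁ x₂) (ttC'.tmul y₁ y₂)
            = ((-1:ℤ)^(p₂*q₁)) • AA'.mul (tau (P.eps (ttP.tmul x₁ y₁))) (tau (ttP.tmul x₂ y₂)) := by
          rw [hGGbidef, mkBi_apply]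
          beta_reduce
          rw [rearrange_tmul ttC ttC' ttP ttTT x₁ y₂ hx₂ hy₁, map_zsmul, hGG_tmul]
        rw [hL1, htau_eps p₁ q₁ x₁ y₁ hx₁ hy₁, htau x₂ y₂]
        rw [hHHdef, mkBi_apply]
        beta_reduce
        rw [hLl'_tmul y₁ y₂, hLl_tmul x₁ x₂, hLr_tmul x₁ x₂, hLr'_tmul y₁ y₂,
          hmC_tmul p₁ x₁ x₂ hx₁, hmC'_tmul q₁ y₁ y₂ hy₁]
        simp only [map_zsmul, map_add, AddMonoidHom.add_apply, AddMonoidHom.smul_apply,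
          smul_add, smul_smul, C.eps_of_mem hx₁, C.eps_of_mem hx₂]
        rw [P11 x₁ p₂ x₂ hx₂, P12 x₁ y₂, P21 q₁ y₁ hy₁ p₂ x₂ hx₂, P22 q₁ y₁ hy₁ y₂]
        simp only [smul_smul]
        rcases q₁ with _ | k
        · rw [ht0' y₁ hy₁]
          simp only [map_zero, AddMonoidHom.zero_apply, smul_zero, zero_smul, add_zero,
            zero_add, sub_zero, Nat.mul_zero, Nat.add_zero, pow_zero, mul_one, one_mul,
            smul_eq_mul]
          match_scalars <;> ring
        · rw [hcu' k y₁ hy₁]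
          rcases p₁ with _ | m
          · rcases p₂ with _ | l
            · rw [ht0 x₂ hx₂]
              simp only [map_zero, AddMonoidHom.zero_apply, smul_zero, zero_smul, add_zero,
                zero_add, sub_zero, zero_sub, mul_zero, zero_mul, Nat.zero_mul, Nat.zero_add,
                pow_zero, mul_one, one_mul, smul_eq_mul, neg_zero]
              match_scalars <;> ring
            · rw [hcu l x₂ hx₂]
              have hs : ((-1:ℤ))^((l+1)*(k+1)) * (-1:ℤ)^(k+1) * (-1:ℤ)^(k*l)
                  = -(-1:ℤ)^(l+1) := by
                rw [← pow_add, ← pow_add]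
                have h2 : -(-1:ℤ)^(l+1) = (-1:ℤ)^(l+1+1) := by rw [pow_succ]; ring
                rw [h2]
                apply negOnePow_congr
                have e : (l+1)*(k+1) + (k+1) + k*l = 2*(k*l+k) + (l+1+1) := by ring
                rw [e]
                generalize k*l + k = mm
                omega
              simp only [mul_zero, zero_mul, zero_smul, add_zero, zero_add, smul_zero,
                sub_zero, zero_sub, Nat.zero_add, Nat.add_sub_cancel, smul_eq_mul, neg_zero]
              match_scalars
              all_goals try ring
              all_goals linear_combination (cu' y₂ * cu x₁) * hs
          · rw [hcu m x₁ hx₁]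
            simp only [mul_zero, zero_mul, zero_smul, add_zero, zero_add, smul_zero, sub_zero,
              zero_sub, neg_zero, smul_eq_mul]
      have hteqm : ∀ c, A.d (t c) + t (C.d c) = mC (comulC c) := fun c => hteq c
      have hteqm' : ∀ c, A'.d (t' c) + t' (C'.d c) = mC' (comulC' c) := fun c => hteq' c
      have hdx : ∀ (p : ℕ) (x : C.X), x ∈ C.gr p →
          AA'.d (ttA.tmul (t x) A'.one) = ttA.tmul (A.d (t x)) A'.one := by
        intro p x hx
        rcases p with _ | s
        · rw [ht0 x hx]; simp
        · rw [ttA.d_tmul s (t x) (htgr s x hx) A'.one, A'.d_gr0 A'.one A'.one_gr]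
          simp
      have hdy : ∀ (y : C'.X),
          AA'.d (ttA.tmul A.one (t' y)) = ttA.tmul A.one (A'.d (t' y)) := by
        intro y
        rw [ttA.d_tmul 0 A.one A.one_gr (t' y), A.d_gr0 A.one A.one_gr]
        simp
      have hmapeq : AA'.d.comp tau + tau.comp P.d = GG.comp comulP := by
        apply ttP.hom_ext
        intro p q x y hx hy
        simp only [AddMonoidHom.add_apply, AddMonoidHom.comp_apply]
        have hLHS : AA'.d (tau (ttP.tmul x y)) + tau (P.d (ttP.tmul x y))
            = cu' y • ttA.tmul (A.d (t x) + t (C.d x)) A'.one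
              + cu x • ttA.tmul A.one (A'.d (t' y) + t' (C'.d y)) := by
          rw [htau x y, ttP.d_tmul p x hx y]
          simp only [map_add, map_zsmul]
          rw [hdx p x hx, hdy y, htau (C.d x) y, htau x (C'.d y)]
          rw [hthC x, hthC' y, zero_smul, zero_smul, add_zero, zero_add]
          have hsgn : ((-1:ℤ)^p) • (cu x • ttA.tmul A.one (t' (C'.d y)))
              = cu x • ttA.tmul A.one (t' (C'.d y)) := by
            rcases p with _ | s
            · rw [pow_zero, one_smul]
            · rw [hcu s x hx]; simp
          rw [hsgn]
          simp only [map_add, AddMonoidHom.add_apply, smul_add]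
          abel
        have hRHS : GG (comulP (ttP.tmul x y))
            = cu' y • ttA.tmul (mC (comulC x)) A'.one
              + cu x • ttA.tmul A.one (mC' (comulC' y)) := by
          rw [hcomulP x y]
          have hstep : GG (rearrange ttC ttC' ttP ttTT (comulC x) (comulC' y))
              = GGbi (comulC x) (comulC' y) := by rw [hGGbidef]; rfl
          rw [hstep, keyGH, hHHdef, mkBi_apply]
          beta_reduce
          rw [hl x, hr x, hl' y, hr' y]
          abel
        rw [hLHS, hRHS, hteqm x, hteqm' y]
      intro c
      exact DFunLike.congr_fun hmapeq c
  exact main _ (fun x y => by rw [TensorCx.lift_tmul]; rfl)
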